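/- Let Λ be a subgroup of an abelian group A, let Λ' ⊇ Λ be a subgroup with [Λ' : Λ] = c < ∞. Fix t in some abelian group B and a homomorphism f : A → B. Define n_t := min{n ≥ 1 : n·t ∈ f(Λ + T)} and n'_t := min{n ≥ 1 : n·t ∈ f(Λ' + T)}, where T is the torsion subgroup of A, and assume both minima exist. Then n_t ≤ c · n'_t. -/

import Mathlib

/-- inequality (7.9): comparing minimal denominators with
respect to a subgroup `Λ` and a finite-index overgroup `Λ'`: if
`n_t = min{n ≥ 1 : n·t ∈ f(Λ + T)}` and `n'_t = min{n ≥ 1 : n·t ∈ f(Λ' + T)}`,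
`T` the torsion subgroup of `A`, and `[Λ' : Λ] = c < ∞`, then `n_t ≤ c · n'_t`. -/
theorem stmt14 (A B : Type*) [AddCommGroup A] [AddCommGroup B]
    (Λ Λ' : AddSubgroup A) (hΛΛ' : Λ ≤ Λ')
    (T : AddSubgroup A) (hT : ∀ x : A, x ∈ T ↔ IsOfFinAddOrder x)
    (c : ℕ) (hc : 0 < c) (hidx : AddSubgroup.relIndex Λ Λ' = c)
    (f : A →+ B) (t : B) (nt nt' : ℕ)
    (hnt1 : 1 ≤ nt) (hnt'1 : 1 ≤ nt')
    (hmem : nt • t ∈ AddSubgroup.map f (Λ ⊔ T))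
    (hmin : ∀ m : ℕ, 1 ≤ m → m • t ∈ AddSubgroup.map f (Λ ⊔ T) → nt ≤ m)
    (hmem' : nt' • t ∈ AddSubgroup.map f (Λ' ⊔ T))
    (hmin' : ∀ m : ℕ, 1 ≤ m → m • t ∈ AddSubgroup.map f (Λ' ⊔ T) → nt' ≤ m) :
    nt ≤ c * nt' := by
  obtain ⟨x, hx, hfx⟩ := hmem'
  -- write x = λ' + s
  obtain ⟨y, hy, z, hz, rfl⟩ := AddSubgroup.mem_sup.mp hx
  apply hmin (c * nt') (Nat.one_le_iff_ne_zero.mpr (by positivity))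
  have hcy : c • y ∈ Λ := by
    have := (Λ.addSubgroupOf Λ').nsmul_index_mem (⟨y, hy⟩ : Λ')
    rw [AddSubgroup.relIndex] at hidx
    rw [hidx] at this
    simpa [AddSubgroup.mem_addSubgroupOf] using this
  have hcz : c • z ∈ T := T.nsmul_mem hz c
  refine ⟨c • (y + z), ?_, ?_⟩
  · rw [smul_add]
    exact AddSubgroup.mem_sup.mpr ⟨c • y, hcy, c • z, hcz, rfl⟩
  · rw [map_nsmul, hfx, mul_smul]
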